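/- (Subdifferential of the anisotropy functional, nonsmooth case.) Let Ω ⊂ ℝ² be a measurable set of finite Lebesgue measure, and let γ : ℝ² → [0, ∞) be convex and Lipschitz continuous. Define Φ(w) := ∫_Ω γ(w(x)) dx for w ∈ L²(Ω; ℝ²) (finite, by the linear growth of γ). Then for w, v ∈ L²(Ω; ℝ²), the subgradient inequality ∫_Ω v(x) · (u(x) − w(x)) dx ≤ Φ(u) − Φ(w) for all u ∈ L²(Ω; ℝ²) holds if and only if for a.e. x ∈ Ω one has v(x) · (z − w(x)) ≤ γ(z) − γ(w(x)) for every z ∈ ℝ² (i.e. v(x) ∈ ∂γ(w(x)) a.e. in Ω). -/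

import Mathlib

open Real MeasureTheory RealInnerProductSpace NNReal

noncomputable abbrev E2 : Type := EuclideanSpace ℝ (Fin 2)

private lemma inner_integrable_aux {μ : Measure E2} {f g : E2 → E2}
    (hf : MemLp f 2 μ) (hg : MemLp g 2 μ) :
    Integrable (fun x => ⟪f x, g x⟫) μ := by
  have h := MeasureTheory.L2.integrable_inner (𝕜 := ℝ) (hf.toLp f) (hg.toLp g)
  refine h.congr ?_
  filter_upwards [hf.coeFn_toLp, hg.coeFn_toLp] with x h1 h2
  rw [h1, h2]

private lemma gamma_integrable_aux {μ : Measure E2} [IsFiniteMeasure μ]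
    {γ : E2 → ℝ} {L : ℝ≥0} (hγ_lip : LipschitzWith L γ)
    {f : E2 → E2} (hf : MemLp f 2 μ) :
    Integrable (fun x => γ (f x)) μ := by
  have hfi : Integrable f μ := hf.integrable one_le_two
  have hmeas : AEStronglyMeasurable (fun x => γ (f x)) μ :=
    hγ_lip.continuous.comp_aestronglyMeasurable hf.aestronglyMeasurable
  refine Integrable.mono' ((integrable_const |γ 0|).add (hfi.norm.const_mul L)) hmeas ?_
  filter_upwards with x
  have h1 : |γ (f x) - γ 0| ≤ L * ‖f x - 0‖ := by
    simpa [Real.dist_eq, dist_eq_norm] using hγ_lip.dist_le_mul (f x) 0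
  have h2 : |γ (f x)| ≤ |γ 0| + |γ (f x) - γ 0| := by
    calc |γ (f x)| = |γ 0 + (γ (f x) - γ 0)| := by ring_nf
    _ ≤ |γ 0| + |γ (f x) - γ 0| := abs_add_le _ _
  calc ‖γ (f x)‖ = |γ (f x)| := rfl
    _ ≤ |γ 0| + |γ (f x) - γ 0| := h2
    _ ≤ |γ 0| + L * ‖f x‖ := by
        have h1' : |γ (f x) - γ 0| ≤ (L : ℝ) * ‖f x‖ := by simpa using h1
        exact add_le_add (le_refl _) h1'

theorem stmt16 (Ω : Set E2) (hΩ : MeasurableSet Ω) (hΩfin : volume Ω ≠ ⊤)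
    (γ : E2 → ℝ) (L : ℝ≥0)
    (hγ_nonneg : ∀ x, 0 ≤ γ x) (hγ_conv : ConvexOn ℝ Set.univ γ)
    (hγ_lip : LipschitzWith L γ)
    (w v : E2 → E2)
    (hw : MemLp w 2 (volume.restrict Ω)) (hv : MemLp v 2 (volume.restrict Ω)) :
    (∀ u : E2 → E2, MemLp u 2 (volume.restrict Ω) →
        ∫ x in Ω, ⟪v x, u x - w x⟫ ≤ (∫ x in Ω, γ (u x)) - ∫ x in Ω, γ (w x))
      ↔ ∀ᵐ x ∂volume.restrict Ω, ∀ z : E2, ⟪v x, z - w x⟫ ≤ γ z - γ (w x) := by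
  set μ := volume.restrict Ω with hμ
  haveI : IsFiniteMeasure μ := ⟨by
    rw [Measure.restrict_apply_univ]; exact lt_top_iff_ne_top.2 hΩfin⟩
  have hγw : Integrable (fun x => γ (w x)) μ := gamma_integrable_aux hγ_lip hw
  constructor
  · intro h
    obtain ⟨D, hDc, hDd⟩ := TopologicalSpace.exists_countable_dense E2
    have key : ∀ z : E2, ∀ᵐ x ∂μ, ⟪v x, z - w x⟫ ≤ γ z - γ (w x) := by
      intro z
      have hconst : MemLp (fun _ : E2 => z) 2 μ := memLp_const z
      have hzw : MemLp (fun x => z - w x) 2 μ := hconst.sub hw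
      have hfint : Integrable (fun x => ⟪v x, z - w x⟫) μ :=
        inner_integrable_aux hv hzw
      have hgint : Integrable (fun x => γ z - γ (w x)) μ :=
        (integrable_const (γ z)).sub hγw
      refine ae_le_of_forall_setIntegral_le hfint hgint ?_
      intro s hs _
      set u := fun x => w x + s.indicator (fun x => z - w x) x with hudef
      have hu : MemLp u 2 μ := hw.add (hzw.indicator hs)
      have hmain := h u hu
      have huw : ∀ x, u x - w x = s.indicator (fun x => z - w x) x := by
        intro x; simp [hudef]
      have hLHS : (∫ x in Ω, ⟪v x, u x - w x⟫)
          = ∫ x in s, ⟪v x, z - w x⟫ ∂μ := by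
        rw [← integral_indicator hs]
        congr 1
        ext x
        rw [huw x]
        by_cases hxs : x ∈ s <;> simp [Set.indicator_of_mem, Set.indicator_of_notMem, hxs]
      have hγu : Integrable (fun x => γ (u x)) μ := gamma_integrable_aux hγ_lip hu
      have hRHS : (∫ x in Ω, γ (u x)) - ∫ x in Ω, γ (w x)
          = ∫ x in s, (γ z - γ (w x)) ∂μ := by
        rw [← integral_sub hγu hγw, ← integral_indicator hs]
        congr 1
        ext x
        by_cases hxs : x ∈ s
        · have : u x = z := by simp [hudef, Set.indicator_of_mem hxs]
          simp [this, Set.indicator_of_mem hxs]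
        · have : u x = w x := by simp [hudef, Set.indicator_of_notMem hxs]
          simp [this, Set.indicator_of_notMem hxs]
      calc ∫ x in s, ⟪v x, z - w x⟫ ∂μ = ∫ x in Ω, ⟪v x, u x - w x⟫ := hLHS.symm
        _ ≤ (∫ x in Ω, γ (u x)) - ∫ x in Ω, γ (w x) := hmain
        _ = ∫ x in s, (γ z - γ (w x)) ∂μ := hRHS
    have hball : ∀ᵐ x ∂μ, ∀ z ∈ D, ⟪v x, z - w x⟫ ≤ γ z - γ (w x) :=
      (ae_ball_iff hDc).2 fun z _ => key z
    filter_upwards [hball] with x hx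
    intro z
    have hclosed : IsClosed {z : E2 | ⟪v x, z - w x⟫ ≤ γ z - γ (w x)} := by
      apply isClosed_le
      · exact Continuous.inner continuous_const (continuous_id.sub continuous_const)
      · exact hγ_lip.continuous.sub continuous_const
    have hsub : (Set.univ : Set E2) ⊆ {z : E2 | ⟪v x, z - w x⟫ ≤ γ z - γ (w x)} := by
      rw [← hDd.closure_eq]
      exact closure_minimal (fun z hz => hx z hz) hclosed
    exact hsub (Set.mem_univ z)
  · intro h u hu
    have h1 : Integrable (fun x => ⟪v x, u x - w x⟫) μ :=
      inner_integrable_aux hv (hu.sub hw)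
    have h2 : Integrable (fun x => γ (u x)) μ := gamma_integrable_aux hγ_lip hu
    have hle : ∀ᵐ x ∂μ, ⟪v x, u x - w x⟫ ≤ γ (u x) - γ (w x) := by
      filter_upwards [h] with x hx using hx (u x)
    calc (∫ x in Ω, ⟪v x, u x - w x⟫)
        ≤ ∫ x in Ω, (γ (u x) - γ (w x)) := integral_mono_ae h1 (h2.sub hγw) hle
      _ = (∫ x in Ω, γ (u x)) - ∫ x in Ω, γ (w x) := integral_sub h2 hγw
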